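/- For all real numbers a, b with 0 < |b| < a and every integer l, the integral over ω ∈ [−π, π] of cos(lω)/(a² + b² − 2ab·cos ω) with respect to Lebesgue measure equals (2π/(a² − b²))·(b/a)^{|l|}. -/

import Mathlib

open MeasureTheory Real

namespace CIQ

lemma Dpos {a b : ℝ} (hba : |b| < a) (ω : ℝ) :
    0 < a ^ 2 + b ^ 2 - 2 * a * b * Real.cos ω := by
  have ha : 0 < a := lt_of_le_of_lt (abs_nonneg b) hba
  have h3 : a * b * Real.cos ω ≤ a * |b| := by
    calc a * b * Real.cos ω ≤ |a * b * Real.cos ω| := le_abs_self _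
      _ = a * |b| * |Real.cos ω| := by rw [abs_mul, abs_mul, abs_of_pos ha]
      _ ≤ a * |b| * 1 :=
          mul_le_mul_of_nonneg_left (Real.abs_cos_le_one ω) (by positivity)
      _ = a * |b| := mul_one _
  nlinarith [sq_abs b, pow_pos (show (0:ℝ) < a - |b| by linarith) 2]

noncomputable def J (a b : ℝ) (n : ℕ) : ℝ :=
  ∫ ω in Set.Icc (-π) π, Real.cos (n * ω) / (a ^ 2 + b ^ 2 - 2 * a * b * Real.cos ω)

lemma cont {a b : ℝ} (hba : |b| < a) (c : ℝ) :
    Continuous fun ω => Real.cos (c * ω) / (a ^ 2 + b ^ 2 - 2 * a * b * Real.cos ω) :=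
  Continuous.div (by fun_prop) (by fun_prop) (fun ω => (Dpos hba ω).ne')

lemma integ {a b : ℝ} (hba : |b| < a) (c : ℝ) :
    IntegrableOn (fun ω => Real.cos (c * ω) / (a ^ 2 + b ^ 2 - 2 * a * b * Real.cos ω))
      (Set.Icc (-π) π) volume :=
  (cont hba c).integrableOn_Icc

lemma cos_int_zero (c : ℤ) (hc : c ≠ 0) :
    ∫ ω in Set.Icc (-π) π, Real.cos (c * ω) = 0 := by
  have hc' : (c : ℝ) ≠ 0 := Int.cast_ne_zero.mpr hc
  rw [integral_Icc_eq_integral_Ioc,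
    ← intervalIntegral.integral_of_le (by linarith [pi_pos] : -π ≤ π),
    intervalIntegral.integral_comp_mul_left (fun x => Real.cos x) hc',
    _root_.integral_cos]
  simp [mul_neg, Real.sin_int_mul_pi]

lemma base {a b : ℝ} (hba : |b| < a) :
    (a ^ 2 + b ^ 2) * J a b 0 - 2 * a * b * J a b 1 = 2 * π := by
  have key : (∫ ω in Set.Icc (-π) π,
        ((a ^ 2 + b ^ 2) * (Real.cos (((0 : ℕ) : ℝ) * ω) / (a ^ 2 + b ^ 2 - 2 * a * b * Real.cos ω))
          - 2 * a * b * (Real.cos (((1 : ℕ) : ℝ) * ω) / (a ^ 2 + b ^ 2 - 2 * a * b * Real.cos ω))))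
      = ∫ _ω in Set.Icc (-π) π, (1 : ℝ) := by
    apply setIntegral_congr_fun measurableSet_Icc
    intro ω _
    have hD := (Dpos hba ω).ne'
    simp only [Nat.cast_zero, Nat.cast_one, zero_mul, one_mul, Real.cos_zero]
    field_simp
    exact div_self (by intro h; apply hD; linarith)
  rw [integral_sub ((integ hba _).const_mul _) ((integ hba _).const_mul _),
    integral_const_mul, integral_const_mul] at key
  have hvol : (∫ _ω in Set.Icc (-π) π, (1 : ℝ)) = 2 * π := by
    rw [setIntegral_const, measureReal_def, Real.volume_Icc, smul_eq_mul, mul_one,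
      ENNReal.toReal_ofReal (by linarith [pi_pos])]
    ring
  rw [J, J]
  rw [hvol] at key
  linarith [key]

lemma recur {a b : ℝ} (hba : |b| < a) (n : ℕ) :
    (a ^ 2 + b ^ 2) * J a b (n + 1) = a * b * (J a b (n + 2) + J a b n) := by
  have key : (∫ ω in Set.Icc (-π) π,
        ((a ^ 2 + b ^ 2) * (Real.cos (((n + 1 : ℕ) : ℝ) * ω) / (a ^ 2 + b ^ 2 - 2 * a * b * Real.cos ω))
          - a * b * (Real.cos (((n + 2 : ℕ) : ℝ) * ω) / (a ^ 2 + b ^ 2 - 2 * a * b * Real.cos ω))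
          - a * b * (Real.cos (((n : ℕ) : ℝ) * ω) / (a ^ 2 + b ^ 2 - 2 * a * b * Real.cos ω))))
      = ∫ ω in Set.Icc (-π) π, Real.cos (((n + 1 : ℕ) : ℝ) * ω) := by
    apply setIntegral_congr_fun measurableSet_Icc
    intro ω _
    have hD := (Dpos hba ω).ne'
    have trig : Real.cos (((n + 2 : ℕ) : ℝ) * ω) + Real.cos (((n : ℕ) : ℝ) * ω)
        = 2 * Real.cos ω * Real.cos (((n + 1 : ℕ) : ℝ) * ω) := by
      have h1 : ((n + 2 : ℕ) : ℝ) * ω = ((n + 1 : ℕ) : ℝ) * ω + ω := by push_cast; ring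
      have h2 : ((n : ℕ) : ℝ) * ω = ((n + 1 : ℕ) : ℝ) * ω - ω := by push_cast; ring
      rw [h1, h2, Real.cos_add, Real.cos_sub]
      ring
    beta_reduce
    rw [mul_div_assoc', mul_div_assoc', mul_div_assoc', div_sub_div_same, div_sub_div_same, div_eq_iff hD]
    push_cast at trig ⊢
    linear_combination (-(a*b)) * trig
  rw [integral_sub ?h1 ?h2, integral_sub ?h3 ?h4,
    integral_const_mul, integral_const_mul, integral_const_mul] at key
  case h1 => exact ((integ hba _).const_mul _).sub ((integ hba _).const_mul _)
  case h2 => exact (integ hba _).const_mul _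
  case h3 => exact (integ hba _).const_mul _
  case h4 => exact (integ hba _).const_mul _
  have hz : (∫ ω in Set.Icc (-π) π, Real.cos (((n + 1 : ℕ) : ℝ) * ω)) = 0 := by
    have h := cos_int_zero (n + 1) (by omega)
    have hc : ((n + 1 : ℤ) : ℝ) = ((n + 1 : ℕ) : ℝ) := by push_cast; ring
    rwa [hc] at h
  rw [hz] at key
  rw [J, J, J]
  linarith [key]

lemma bound {a b : ℝ} (hba : |b| < a) (n : ℕ) :
    |J a b n| ≤ (1 / (a - |b|) ^ 2) * (2 * π) := by
  have hpos : 0 < (a - |b|) ^ 2 := pow_pos (by linarith) 2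
  have hfin : volume (Set.Icc (-π) π) < ⊤ := by
    rw [Real.volume_Icc]; exact ENNReal.ofReal_lt_top
  have hC : ∀ ω ∈ Set.Icc (-π) π,
      ‖Real.cos ((n : ℝ) * ω) / (a ^ 2 + b ^ 2 - 2 * a * b * Real.cos ω)‖ ≤ 1 / (a - |b|) ^ 2 := by
    intro ω _
    have hD : (a - |b|) ^ 2 ≤ a ^ 2 + b ^ 2 - 2 * a * b * Real.cos ω := by
      have ha : 0 < a := lt_of_le_of_lt (abs_nonneg b) hba
      have h3 : a * b * Real.cos ω ≤ a * |b| := by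
        calc a * b * Real.cos ω ≤ |a * b * Real.cos ω| := le_abs_self _
          _ = a * |b| * |Real.cos ω| := by rw [abs_mul, abs_mul, abs_of_pos ha]
          _ ≤ a * |b| * 1 := mul_le_mul_of_nonneg_left (Real.abs_cos_le_one ω) (by positivity)
          _ = a * |b| := mul_one _
      nlinarith [sq_abs b]
    rw [Real.norm_eq_abs, abs_div, div_le_div_iff₀ (abs_pos.mpr (Dpos hba ω).ne') hpos]
    calc |Real.cos ((n : ℝ) * ω)| * (a - |b|) ^ 2 ≤ 1 * (a ^ 2 + b ^ 2 - 2 * a * b * Real.cos ω) := by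
          apply mul_le_mul (Real.abs_cos_le_one _) hD (le_of_lt hpos) zero_le_one
      _ = 1 * |a ^ 2 + b ^ 2 - 2 * a * b * Real.cos ω| := by
          rw [abs_of_pos (Dpos hba ω)]
  have := norm_setIntegral_le_of_norm_le_const (μ := volume) hfin hC
  rw [measureReal_def, Real.volume_Icc, ENNReal.toReal_ofReal (by linarith [pi_pos])] at this
  calc |J a b n| ≤ (1 / (a - |b|) ^ 2) * (π - -π) := this
    _ = (1 / (a - |b|) ^ 2) * (2 * π) := by ring

lemma closed_form {a b : ℝ} (hb : 0 < |b|) (hba : |b| < a) (n : ℕ) :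
    J a b n = (2 * π / (a ^ 2 - b ^ 2)) * (b / a) ^ n := by
  have ha : 0 < a := lt_of_le_of_lt (abs_nonneg b) hba
  have ha0 : a ≠ 0 := ha.ne'
  have hb0 : b ≠ 0 := by simpa [abs_pos] using hb
  have hab2 : (0:ℝ) < a ^ 2 - b ^ 2 := by nlinarith [sq_abs b]
  set c : ℝ := 2 * π / (a ^ 2 - b ^ 2) with hc
  have hc' : c * (a ^ 2 - b ^ 2) = 2 * π := by
    rw [hc]; field_simp
  clear_value c
  set d : ℝ := J a b 0 - c with hd
  have hJ0 : J a b 0 = c + d := by rw [hd]; ring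
  clear_value d
  have h1 : J a b 1 = c * (b / a) + d / 2 * (a / b + b / a) := by
    have hB := base hba
    have h2 : 2 * a * b * J a b 1 = 2 * b ^ 2 * c + (a ^ 2 + b ^ 2) * d := by
      linear_combination -hB + (a ^ 2 + b ^ 2) * hJ0 + hc'
    have h3 : 2 * a * b * (c * (b / a) + d / 2 * (a / b + b / a)) = 2 * b ^ 2 * c + (a ^ 2 + b ^ 2) * d := by
      field_simp
    have hne : (2 : ℝ) * a * b ≠ 0 := by
      simp [ha0, hb0]
    exact mul_left_cancel₀ hne (h2.trans h3.symm)
  have main : ∀ m : ℕ, J a b m = c * (b / a) ^ m + d / 2 * ((a / b) ^ m + (b / a) ^ m) := by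
    intro m
    induction m using Nat.twoStepInduction with
    | zero => simp only [pow_zero, mul_one]; rw [hJ0]; ring
    | one => simp only [pow_one]; exact h1
    | more n ih1 ih2 =>
      have hR := recur hba n
      have e : J a b (n + 2) = ((a ^ 2 + b ^ 2) * J a b (n + 1) - a * b * J a b n) / (a * b) := by
        field_simp
        linarith [hR]
      rw [e, ih1, ih2]
      simp only [pow_succ]
      field_simp
      ring
  have hd0 : d = 0 := by
    by_contra hd0
    set M : ℝ := (1 / (a - |b|) ^ 2) * (2 * π) + |c| with hM
    have hMb : ∀ m : ℕ, |d| / 2 * ((a / |b|) ^ m - 1) ≤ M := by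
      intro m
      have h1' : |d / 2 * ((a / b) ^ m + (b / a) ^ m)| ≤ M := by
        have : d / 2 * ((a / b) ^ m + (b / a) ^ m) = J a b m - c * (b / a) ^ m := by
          rw [main m]; ring
        rw [this]
        have hba' : |(b / a) ^ m| ≤ 1 := by
          rw [abs_pow, abs_div, abs_of_pos ha]
          apply pow_le_one₀ (by positivity)
          rw [div_le_one ha]; exact le_of_lt hba
        calc |J a b m - c * (b / a) ^ m| ≤ |J a b m| + |c * (b / a) ^ m| := abs_sub _ _
          _ ≤ (1 / (a - |b|) ^ 2) * (2 * π) + |c| * 1 := by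
              gcongr
              · exact bound hba m
              · rw [abs_mul]
                exact mul_le_mul_of_nonneg_left hba' (abs_nonneg c)
          _ = M := by rw [hM]; ring
      have h2' : |d| / 2 * ((a / |b|) ^ m - 1) ≤ |d / 2 * ((a / b) ^ m + (b / a) ^ m)| := by
        have e1 : |(a / b) ^ m| = (a / |b|) ^ m := by
          rw [abs_pow, abs_div, abs_of_pos ha]
        have e2 : |(b / a) ^ m| ≤ 1 := by
          rw [abs_pow, abs_div, abs_of_pos ha]
          apply pow_le_one₀ (by positivity)
          rw [div_le_one ha]; exact le_of_lt hba
        have e3 : |(a / b) ^ m + (b / a) ^ m| ≥ (a / |b|) ^ m - 1 := by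
          calc |(a / b) ^ m + (b / a) ^ m| ≥ |(a / b) ^ m| - |(b / a) ^ m| := by
                have := abs_sub_abs_le_abs_sub ((a / b) ^ m) (-((b / a) ^ m))
                simpa using this
            _ ≥ (a / |b|) ^ m - 1 := by rw [e1]; linarith
        rw [abs_mul, abs_div, abs_two]
        exact mul_le_mul_of_nonneg_left e3 (by positivity)
      linarith [h1', h2']
    have hgt1 : 1 < a / |b| := (one_lt_div hb).mpr hba
    obtain ⟨m, hm⟩ := pow_unbounded_of_one_lt (2 * M / |d| + 1) hgt1
    have hdpos : 0 < |d| := abs_pos.mpr hd0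
    have := hMb m
    have h3 : 2 * M / |d| + 1 < (a / |b|) ^ m := hm
    have h4 : |d| / 2 * ((a / |b|) ^ m - 1) > |d| / 2 * (2 * M / |d|) := by
      apply mul_lt_mul_of_pos_left (by linarith) (by positivity)
    have h5 : |d| / 2 * (2 * M / |d|) = M := by field_simp
    linarith
  rw [main n, hd0]
  ring

end CIQ

theorem cos_integral_quadratic_form (a b : ℝ) (hb : 0 < |b|) (hba : |b| < a) (l : ℤ) :
    (∫ ω in Set.Icc (-π) π,
        Real.cos (l * ω) / (a ^ 2 + b ^ 2 - 2 * a * b * Real.cos ω))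
      = (2 * π / (a ^ 2 - b ^ 2)) * (b / a) ^ l.natAbs := by
  have hcong : ∀ ω : ℝ, Real.cos ((l : ℝ) * ω) = Real.cos ((l.natAbs : ℝ) * ω) := by
    intro ω
    have h0 : ((l.natAbs : ℝ)) = |(l : ℝ)| := by
      rw [Nat.cast_natAbs]
      push_cast
      rfl
    rw [h0]
    rcases abs_choice ((l : ℝ)) with h | h
    · rw [h]
    · rw [h, neg_mul, Real.cos_neg]
  simp only [hcong]
  have h := CIQ.closed_form hb hba l.natAbs
  unfold CIQ.J at h
  exact h
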